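/- (CCP representation under (ρ+1)-period finite dependence; Proposition 4.) Let X be a finite nonempty set and D a finite set of actions with baseline 0, β ∈ ℝ, ρ ≥ 1. Let V : X → ℝ, v : D × X → ℝ, u : D × X → ℝ, e : D × X → ℝ, f : D × X → X → ℝ satisfy, for all d, x: V(x) = v(d, x) + e(d, x) and v(d, x) = u(d, x) + β Σ_{x'} f(x' | d, x) V(x'). For s = 1, …, ρ let w_s : D × X → ℝ with Σ_d w_s(d, x) = 1 for all x, and let F(w_s) be the X×X matrix with (x, x') entry Σ_d w_s(d, x) f(x' | d, x), and c(w_s)(x) = Σ_d w_s(d, x)(u(d, x) + e(d, x)). Suppose that for all d ∈ D and x ∈ X the row vector f̃(· | d, x)ᵀ F(w_1) ⋯ F(w_ρ) is zero, where f̃(· | d, x) = f(· | d, x) − f(· | 0, x). Then the value differences admit the finite-horizon representation ṽ(d, x) := v(d, x) − v(0, x) = ũ(d, x) + Σ_{τ=1}^{ρ} β^τ f̃(· | d, x)ᵀ ( F(w_1) ⋯ F(w_{τ−1}) ) c(w_τ) for all d, x, where ũ(d, x) = u(d, x) − u(0, x) and the empty product is the identity; in particular ṽ does not depend on V. -/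
import Mathlib


open Matrix

/-- The `w`-weighted one-step transition matrix with `(x, x')` entry
`Σ_d w(d, x) f(x' | d, x)`. -/
noncomputable def statTransMatrix {X D : Type*} [Fintype X] [Fintype D]
    (f : D → X → X → ℝ) (w : D → X → ℝ) : Matrix X X ℝ :=
  Matrix.of fun x x' => ∑ d : D, w d x * f d x x'

/-- The partial products `F(w₁) ⋯ F(w_k)` of weighted transition matrices; the empty
product (`k = 0`) is the identity matrix. -/
noncomputable def prodTransMatrix {X D : Type*} [Fintype X] [DecidableEq X]
    [Fintype D] (f : D → X → X → ℝ) (ws : ℕ → D → X → ℝ) : ℕ → Matrix X X ℝ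
  | 0 => 1
  | (k + 1) => prodTransMatrix f ws k * statTransMatrix f (ws (k + 1))

/-- The `w`-weighted vector `c(w)` with entry `Σ_d w(d, x) (u(d, x) + e(d, x))`. -/
noncomputable def weightedPayoff {X D : Type*} [Fintype D]
    (u e : D → X → ℝ) (w : D → X → ℝ) : X → ℝ :=
  fun x => ∑ d : D, w d x * (u d x + e d x)

/-- CCP representation under (ρ+1)-period finite dependence (Proposition 4): if the
forward product `f̃(·|d,x)ᵀ F(w₁) ⋯ F(w_ρ)` vanishes for every state–action pair, the
value differences admit a finite-horizon representation in terms of flow payoffs and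
the ψ-corrections `e`; in particular they do not depend on `V`. -/
theorem ccp_representation_finite_dependence
    {X D : Type*} [Fintype X] [DecidableEq X] [Nonempty X] [Fintype D]
    (d₀ : D) (β : ℝ) (ρ : ℕ) (hρ : 1 ≤ ρ)
    (V : X → ℝ) (v : D → X → ℝ) (u : D → X → ℝ) (e : D → X → ℝ)
    (f : D → X → X → ℝ)
    (hAM : ∀ (d : D) (x : X), V x = v d x + e d x)
    (hBellman : ∀ (d : D) (x : X),
      v d x = u d x + β * ∑ x' : X, f d x x' * V x')
    (ws : ℕ → D → X → ℝ)
    (hw : ∀ s, 1 ≤ s → s ≤ ρ → ∀ x : X, ∑ d : D, ws s d x = 1)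
    (hdep : ∀ (d : D) (x : X),
      (fun x₁ => f d x x₁ - f d₀ x x₁) ᵥ* prodTransMatrix f ws ρ = 0) :
    ∀ (d : D) (x : X),
      v d x - v d₀ x = (u d x - u d₀ x)
        + ∑ τ ∈ Finset.range ρ, β ^ (τ + 1) *
            ∑ x' : X,
              ((fun x₁ => f d x x₁ - f d₀ x x₁) ᵥ* prodTransMatrix f ws τ) x' *
                weightedPayoff u e (ws (τ + 1)) x' := by
  intro d x
  set g : X → ℝ := fun x₁ => f d x x₁ - f d₀ x x₁ with hg
  -- V is a fixed point of each weighted Bellman operator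
  have hV : ∀ s, 1 ≤ s → s ≤ ρ → ∀ y : X,
      V y = weightedPayoff u e (ws s) y +
        β * ∑ x' : X, statTransMatrix f (ws s) y x' * V x' := by
    intro s h1 h2 y
    have hrow := hw s h1 h2 y
    calc V y = ∑ dd : D, ws s dd y * V y := by rw [← Finset.sum_mul, hrow, one_mul]
      _ = ∑ dd : D, ws s dd y * ((u dd y + e dd y) + β * ∑ x' : X, f dd y x' * V x') := by
          refine Finset.sum_congr rfl fun dd _ => ?_
          rw [hAM dd y, hBellman dd y]; ring
      _ = weightedPayoff u e (ws s) y +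
            β * ∑ x' : X, statTransMatrix f (ws s) y x' * V x' := by
          simp only [weightedPayoff, statTransMatrix, Matrix.of_apply, mul_add,
            Finset.sum_add_distrib, Finset.mul_sum, Finset.sum_mul]
          rw [Finset.sum_comm]
          congr 1
          refine Finset.sum_congr rfl fun _ _ => Finset.sum_congr rfl fun _ _ => by ring
  -- one unrolling step
  have hstep : ∀ (a : X → ℝ) (s : ℕ), 1 ≤ s → s ≤ ρ →
      ∑ x' : X, a x' * V x' =
        (∑ x' : X, a x' * weightedPayoff u e (ws s) x') +
          β * ∑ x' : X, (a ᵥ* statTransMatrix f (ws s)) x' * V x' := by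
    intro a s h1 h2
    calc ∑ x' : X, a x' * V x'
        = ∑ x' : X, a x' * (weightedPayoff u e (ws s) x' +
            β * ∑ x'' : X, statTransMatrix f (ws s) x' x'' * V x'') := by
          refine Finset.sum_congr rfl fun x' _ => ?_
          rw [← hV s h1 h2 x']
      _ = (∑ x' : X, a x' * weightedPayoff u e (ws s) x') +
            β * ∑ x'' : X, (a ᵥ* statTransMatrix f (ws s)) x'' * V x'' := by
          simp only [Matrix.vecMul, dotProduct, mul_add, Finset.sum_add_distrib,
            Finset.mul_sum, Finset.sum_mul]
          rw [Finset.sum_comm]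
          congr 1
          refine Finset.sum_congr rfl fun _ _ => Finset.sum_congr rfl fun _ _ => by ring
  -- induction
  have main : ∀ k, k ≤ ρ →
      β * ∑ x' : X, g x' * V x' =
        (∑ τ ∈ Finset.range k, β ^ (τ + 1) *
          ∑ x' : X, (g ᵥ* prodTransMatrix f ws τ) x' *
            weightedPayoff u e (ws (τ + 1)) x') +
        β ^ (k + 1) * ∑ x' : X, (g ᵥ* prodTransMatrix f ws k) x' * V x' := by
    intro k
    induction k with
    | zero =>
        intro _
        simp [prodTransMatrix, Matrix.vecMul_one]
    | succ k ih =>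
        intro hk
        have hk' : k ≤ ρ := Nat.le_of_succ_le hk
        rw [ih hk', hstep (g ᵥ* prodTransMatrix f ws k) (k + 1) (Nat.succ_le_succ (Nat.zero_le k)) hk]
        have hmul : (g ᵥ* prodTransMatrix f ws k) ᵥ* statTransMatrix f (ws (k + 1)) =
            g ᵥ* prodTransMatrix f ws (k + 1) := by
          rw [show prodTransMatrix f ws (k + 1) =
            prodTransMatrix f ws k * statTransMatrix f (ws (k + 1)) from rfl,
            Matrix.vecMul_vecMul]
        rw [hmul, Finset.sum_range_succ]
        ring
  -- conclude
  have hfin := main ρ le_rfl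
  rw [hdep d x] at hfin
  simp only [Pi.zero_apply, zero_mul, Finset.sum_const_zero, mul_zero, add_zero] at hfin
  have hdiff : v d x - v d₀ x = (u d x - u d₀ x) + β * ∑ x' : X, g x' * V x' := by
    rw [hBellman d x, hBellman d₀ x]
    simp only [hg, sub_mul, Finset.sum_sub_distrib, mul_sub]
    ring
  rw [hdiff, hfin]
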